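/- Let M : Fin k → Fin l → ℝ be a Monge matrix, let S be a finite set of rows, let r be a row, and let c⁻ ≤ c⁺ be columns. Suppose that M r c⁻ ≤ M r' c⁻ for every r' ∈ S and M r c⁺ ≤ M r' c⁺ for every r' ∈ S. Then for every column c with c⁻ ≤ c ≤ c⁺ and every r' ∈ S it holds that M r c ≤ M r' c. In other words, if row r is at least as good as every row of S at the two border columns of an interval of columns, then r is at least as good as every row of S at every column of that interval. (The correctness claim for detecting category C.1 column groups in the Activate-Row procedure of Section 3 of the paper.) -/
import Mathlib

/-- A rectangular Monge matrix. -/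
def IsMonge {k l : ℕ} (M : Fin k → Fin l → ℝ) : Prop :=
  ∀ i1 i2 : Fin k, ∀ j1 j2 : Fin l, i1 ≤ i2 → j1 ≤ j2 →
    M i2 j1 + M i1 j2 ≤ M i1 j1 + M i2 j2

/-- If row `r` is at least as good as every row of `S` at the two border
columns `c⁻ ≤ c⁺`, then `r` is at least as good as every row of `S` at every
column of the interval `[c⁻, c⁺]`. -/
theorem monge_border_domination {k l : ℕ} (M : Fin k → Fin l → ℝ)
    (hM : IsMonge M) (S : Finset (Fin k)) (r : Fin k)
    (cm cp : Fin l) (hc : cm ≤ cp)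
    (hleft : ∀ r' ∈ S, M r cm ≤ M r' cm)
    (hright : ∀ r' ∈ S, M r cp ≤ M r' cp) :
    ∀ c : Fin l, cm ≤ c → c ≤ cp → ∀ r' ∈ S, M r c ≤ M r' c := by
  intro c h1 h2 r' hr'
  rcases le_total r r' with h | h
  · have := hM r r' cm c h h1
    have := hleft r' hr'
    linarith
  · have := hM r' r c cp h h2
    have := hright r' hr'
    linarith
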